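/- Let q be a prime power, n a positive integer, g a polynomial over F_{q^n} such that g(x)^q = g(x) for every x ∈ F_{q^n}, and L ∈ F_q[x] a linearized polynomial (q-polynomial with coefficients in F_q). Then for every δ ∈ F_{q^n}, the polynomial f(x) = g(x^q − x + δ) + L(x) permutes F_{q^n} if and only if L permutes F_{q^n}. -/

import Mathlib

theorem stmt_5 (p e : ℕ) [Fact p.Prime] (he : 0 < e) (q : ℕ) (hq : q = p ^ e)
    (F : Type) [Field F] [Fintype F] (n : ℕ) (hn : 0 < n)
    (hF : Fintype.card F = q ^ n)
    (g : Polynomial F) (hg : ∀ x : F, (g.eval x) ^ q = g.eval x)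
    (m : ℕ) (a : Fin m → F) (ha : ∀ i, (a i) ^ q = a i)
    (L : F → F) (hL : ∀ x, L x = ∑ i : Fin m, a i * x ^ q ^ (i : ℕ))
    (δ : F) :
    Function.Bijective (fun x => g.eval (x ^ q - x + δ) + L x) ↔
      Function.Bijective L := by
  have hq0 : q ≠ 0 := by rw [hq]; exact (pow_pos (Nat.Prime.pos Fact.out) e).ne'
  -- characteristic
  have hcharP : CharP F p := by
    have hrc : CharP F (ringChar F) := ringChar.charP F
    obtain ⟨k, hrcp, hcard⟩ := FiniteField.card F (ringChar F)
    have hdvd : p ∣ ringChar F ^ (k : ℕ) := by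
      rw [← hcard, hF, hq, ← pow_mul]
      exact dvd_pow_self p (by positivity)
    have hpr := Nat.Prime.dvd_of_dvd_pow (Fact.out) hdvd
    have hp : p = ringChar F := (Nat.prime_dvd_prime_iff_eq Fact.out hrcp).mp hpr
    rwa [hp]
  -- Frobenius-type identities
  have hadd : ∀ x y : F, (x + y) ^ q = x ^ q + y ^ q := by
    intro x y; rw [hq]; exact add_pow_char_pow x y p e
  have hsum : ∀ (t : Fin m → F), (∑ i, t i) ^ q = ∑ i, (t i) ^ q := by
    intro t; rw [hq]; exact sum_pow_char_pow (p := p) (n := e) Finset.univ t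
  -- L is additive
  have Ladd : ∀ x y : F, L (x + y) = L x + L y := by
    intro x y
    rw [hL, hL, hL, ← Finset.sum_add_distrib]
    refine Finset.sum_congr rfl fun i _ => ?_
    have h : (x + y) ^ q ^ (i : ℕ) = x ^ q ^ (i : ℕ) + y ^ q ^ (i : ℕ) := by
      have hqi : q ^ (i : ℕ) = p ^ (e * (i : ℕ)) := by rw [hq, ← pow_mul]
      rw [hqi]
      exact add_pow_char_pow x y p (e * (i : ℕ))
    rw [h, mul_add]
  have L0 : L 0 = 0 := by
    have h := Ladd 0 0
    rw [add_zero] at h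
    exact (left_eq_add.mp h)
  have Lsub : ∀ x y : F, L (x - y) = L x - L y := by
    intro x y
    have h := Ladd (x - y) y
    rw [sub_add_cancel] at h
    exact eq_sub_of_add_eq h.symm
  have Lfrob : ∀ x : F, (L x) ^ q = L (x ^ q) := by
    intro x
    rw [hL, hsum, hL]
    refine Finset.sum_congr rfl fun i _ => ?_
    rw [mul_pow, ha, ← pow_mul, ← pow_mul, mul_comm (q ^ (i : ℕ)) q]
  set f : F → F := fun x => g.eval (x ^ q - x + δ) + L x with hf_def
  have key : ∀ x : F, (f x) ^ q - f x = L (x ^ q - x) := by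
    intro x
    show (g.eval (x ^ q - x + δ) + L x) ^ q - (g.eval (x ^ q - x + δ) + L x)
        = L (x ^ q - x)
    rw [hadd, hg, Lfrob x, Lsub]
    ring
  constructor
  · -- f bijective → L bijective
    intro hf
    rw [← Finite.injective_iff_bijective]
    have hker : ∀ c : F, L c = 0 → c = 0 := by
      intro c hc
      have hc1 : L (c ^ q - c) = 0 := by
        rw [Lsub, ← Lfrob, hc]; simp [zero_pow hq0]
      set S : Set F := Set.range (fun x : F => x ^ q - x) with hS
      have himg : L '' S = S := by
        have h1 : L '' S = Set.range (fun x : F => L (x ^ q - x)) :=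
          (Set.range_comp L _).symm
        have h2 : Set.range (fun x : F => L (x ^ q - x)) =
            Set.range (fun x : F => (f x) ^ q - f x) := by
          exact congrArg Set.range (funext fun x => (key x).symm)
        have h3 : Set.range (fun x : F => (f x) ^ q - f x) = S := by
          ext y
          constructor
          · rintro ⟨x, rfl⟩; exact ⟨f x, rfl⟩
          · rintro ⟨z, rfl⟩
            obtain ⟨x, hx⟩ := hf.surjective z
            refine ⟨x, ?_⟩
            show f x ^ q - f x = z ^ q - z
            rw [hx]
        rw [h1, h2, h3]
      have hfin : S.Finite := Set.toFinite S
      have hmaps : Set.MapsTo L S S := Set.mapsTo_iff_image_subset.mpr himg.subset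
      have hbij : Set.BijOn L S S :=
        (hfin.surjOn_iff_bijOn_of_mapsTo hmaps).mp himg.symm.subset
      have hmem : c ^ q - c ∈ S := ⟨c, rfl⟩
      have h0 : (0 : F) ∈ S := ⟨0, by simp [zero_pow hq0]⟩
      have hcc : c ^ q - c = 0 := hbij.injOn hmem h0 (by rw [hc1, L0])
      have hc2 : c ^ q = c := sub_eq_zero.mp hcc
      have hfc : f c = f 0 := by
        show g.eval (c ^ q - c + δ) + L c = g.eval (0 ^ q - 0 + δ) + L 0
        rw [hc2, hc, L0, zero_pow hq0]
        ring_nf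
      exact hf.injective hfc
    intro x y hxy
    have : L (x - y) = 0 := by rw [Lsub, hxy, sub_self]
    exact sub_eq_zero.mp (hker _ this)
  · -- L bijective → f bijective
    intro hLbij
    rw [← Finite.injective_iff_bijective]
    intro x y hxy
    have hxy' : f x = f y := hxy
    have h1 : L (x ^ q - x) = L (y ^ q - y) := by
      rw [← key, ← key, hxy']
    have h2 : x ^ q - x = y ^ q - y := hLbij.injective h1
    have h3 : L x = L y := by
      have : g.eval (x ^ q - x + δ) + L x = g.eval (y ^ q - y + δ) + L y := hxy'
      rw [h2] at this
      exact add_left_cancel this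
    exact hLbij.injective h3
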